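/- Let λ₁ ∈ (0, 1/2], ℓ > 1 and M > 0. Suppose a : (0, ∞) → ℂ is twice continuously differentiable, a(λ) = 0 for all λ ≥ 2λ₁, and |a^{(j)}(λ)| ≤ M λ^{ℓ−j} for j = 0, 1, 2 and all λ ∈ (0, 2λ₁). Then there is a constant C = C(ℓ, λ₁) (independent of a, M, and L) such that for all L ∈ ℝ: |∫₀^∞ e^{iλL} a(λ) dλ| ≤ C · M · ⟨L⟩^{−2}. -/

import Mathlib

open MeasureTheory Real

section StmtSeven
open Set Filter

private lemma rpow_integrableOn {b r : ℝ} (hb : 0 < b) (hr : -1 < r) :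
    IntegrableOn (fun x : ℝ => x ^ r) (Set.Ioc 0 b) :=
  (intervalIntegral.intervalIntegrable_rpow' (a := 0) (b := b) hr).1

private lemma rpow_setIntegral {b r : ℝ} (hb : 0 ≤ b) (hr : -1 < r) :
    ∫ x in Set.Ioc (0:ℝ) b, x ^ r = b ^ (r+1) / (r+1) := by
  rw [← intervalIntegral.integral_of_le hb, integral_rpow (Or.inl hr),
    Real.zero_rpow (by linarith), sub_zero]

private lemma aux_integrable {f : ℝ → ℂ} {b Mc r : ℝ} (hb : 0 < b) (hr : -1 < r)
    (hc : ContinuousOn f (Set.Ioo 0 b))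
    (hbd : ∀ x ∈ Set.Ioo (0:ℝ) b, ‖f x‖ ≤ Mc * x ^ r) :
    IntegrableOn f (Set.Ioo 0 b) := by
  have hg : IntegrableOn (fun x : ℝ => Mc * x ^ r) (Set.Ioc 0 b) :=
    (rpow_integrableOn hb hr).const_mul Mc
  refine Integrable.mono' (hg.mono_set Set.Ioo_subset_Ioc_self)
    (hc.aestronglyMeasurable measurableSet_Ioo) ?_
  exact (ae_restrict_iff' measurableSet_Ioo).2 (Filter.Eventually.of_forall hbd)

private lemma aux_norm_bound {f : ℝ → ℂ} {b Mc r : ℝ} (hb : 0 < b) (hr : -1 < r)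
    (hbd : ∀ x ∈ Set.Ioo (0:ℝ) b, ‖f x‖ ≤ Mc * x ^ r) :
    ‖∫ x in Set.Ioo (0:ℝ) b, f x‖ ≤ Mc * (b ^ (r+1) / (r+1)) := by
  have h1 : ‖∫ x in Set.Ioo (0:ℝ) b, f x‖ ≤ ∫ x in Set.Ioo (0:ℝ) b, Mc * x ^ r :=
    norm_integral_le_of_norm_le
      ((IntegrableOn.mono_set ((rpow_integrableOn hb hr).const_mul Mc : IntegrableOn _ _ _))
        Set.Ioo_subset_Ioc_self)
      ((ae_restrict_iff' measurableSet_Ioo).2 (Filter.Eventually.of_forall hbd))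
  rw [integral_const_mul] at h1
  refine h1.trans (le_of_eq ?_)
  rw [← integral_Ioc_eq_integral_Ioo, rpow_setIntegral hb.le hr]

private lemma aux_tendsto {f : ℝ → ℂ} {b Mc r : ℝ} (hb : 0 < b) (hr : -1 < r)
    (hfi : IntegrableOn f (Set.Ioo 0 b))
    (hbd : ∀ x ∈ Set.Ioo (0:ℝ) b, ‖f x‖ ≤ Mc * x ^ r) :
    Filter.Tendsto (fun ε => ∫ x in ε..b, f x) (nhdsWithin 0 (Set.Ioi 0))
      (nhds (∫ x in Set.Ioo (0:ℝ) b, f x)) := by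
  have hmem : Set.Ioo (0:ℝ) b ∈ nhdsWithin (0:ℝ) (Set.Ioi 0) :=
    Ioo_mem_nhdsGT_of_mem ⟨le_refl 0, hb⟩
  have hfIoc : IntegrableOn f (Set.Ioc 0 b) :=
    hfi.congr_set_ae (Filter.EventuallyEq.symm Ioo_ae_eq_Ioc)
  rw [← tendsto_sub_nhds_zero_iff]
  have key : ∀ ε ∈ Set.Ioo (0:ℝ) b,
      (∫ x in ε..b, f x) - (∫ x in Set.Ioo (0:ℝ) b, f x) = -∫ x in Set.Ioc (0:ℝ) ε, f x := by
    intro ε hε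
    have hunion : Set.Ioc (0:ℝ) ε ∪ Set.Ioc ε b = Set.Ioc 0 b :=
      Set.Ioc_union_Ioc_eq_Ioc hε.1.le hε.2.le
    have hsplit : (∫ x in Set.Ioc (0:ℝ) b, f x)
        = (∫ x in Set.Ioc (0:ℝ) ε, f x) + ∫ x in Set.Ioc ε b, f x := by
      rw [← hunion]
      exact setIntegral_union (Set.Ioc_disjoint_Ioc_of_le le_rfl) measurableSet_Ioc
        (hfIoc.mono_set (by rw [← hunion]; exact Set.subset_union_left))
        (hfIoc.mono_set (by rw [← hunion]; exact Set.subset_union_right))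
    rw [intervalIntegral.integral_of_le hε.2.le, ← integral_Ioc_eq_integral_Ioo, hsplit]
    ring
  have hbound : ∀ ε ∈ Set.Ioo (0:ℝ) b,
      ‖(∫ x in ε..b, f x) - (∫ x in Set.Ioo (0:ℝ) b, f x)‖ ≤ Mc * (ε ^ (r+1) / (r+1)) := by
    intro ε hε
    rw [key ε hε, norm_neg]
    have h1 : ‖∫ x in Set.Ioc (0:ℝ) ε, f x‖ ≤ ∫ x in Set.Ioc (0:ℝ) ε, Mc * x ^ r := by
      refine norm_integral_le_of_norm_le
        ((IntegrableOn.mono_set ((rpow_integrableOn hb hr).const_mul Mc : IntegrableOn _ _ _))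
          (Set.Ioc_subset_Ioc_right hε.2.le)) ?_
      refine (ae_restrict_iff' measurableSet_Ioc).2 (Filter.Eventually.of_forall fun x hx => ?_)
      exact hbd x ⟨hx.1, lt_of_le_of_lt hx.2 hε.2⟩
    rwa [integral_const_mul, rpow_setIntegral hε.1.le hr] at h1
  have hg : Filter.Tendsto (fun ε : ℝ => Mc * (ε ^ (r+1) / (r+1)))
      (nhdsWithin 0 (Set.Ioi 0)) (nhds 0) := by
    have h0 : Filter.Tendsto (fun ε : ℝ => ε ^ (r+1)) (nhdsWithin 0 (Set.Ioi 0)) (nhds 0) := by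
      have := (Real.continuousAt_rpow_const 0 (r+1) (Or.inr (by linarith))).tendsto
      rw [Real.zero_rpow (by linarith)] at this
      exact this.mono_left nhdsWithin_le_nhds
    simpa using (h0.div_const (r+1)).const_mul Mc
  exact squeeze_zero_norm' (Filter.eventually_of_mem hmem hbound) hg

/-- if `a` is twice continuously differentiable on `(0,∞)`, supported in
`(0, 2λ₁]`, and `|a^{(j)}(λ)| ≤ M λ^{ℓ-j}` for `j = 0,1,2` with `ℓ > 1`, then
`|∫₀^∞ e^{iλL} a(λ) dλ| ≤ C M ⟨L⟩^{-2}` with `C = C(ℓ, λ₁)` independent of `a`, `M`, `L`. -/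
theorem stmt_7 (lam₁ : ℝ) (hlam₁ : lam₁ ∈ Set.Ioc (0:ℝ) (1/2)) (ℓ : ℝ) (hℓ : 1 < ℓ) :
    ∃ C : ℝ, 0 < C ∧ ∀ (a : ℝ → ℂ) (M : ℝ), 0 < M →
      ContDiffOn ℝ 2 a (Set.Ioi 0) →
      (∀ l : ℝ, 2 * lam₁ ≤ l → a l = 0) →
      (∀ l ∈ Set.Ioo (0:ℝ) (2 * lam₁), ∀ j : ℕ, j ≤ 2 →
        ‖iteratedDeriv j a l‖ ≤ M * l ^ (ℓ - j)) →
      ∀ L : ℝ,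
        ‖∫ l in Set.Ioi (0:ℝ), Complex.exp (Complex.I * l * L) * a l‖ ≤
          C * M / (1 + L ^ 2) := by
  obtain ⟨hl0, _⟩ := hlam₁
  set b := 2 * lam₁ with hbdef
  have hb : 0 < b := by positivity
  have hℓ1 : (0:ℝ) < ℓ - 1 := by linarith
  set K₁ : ℝ := b ^ (ℓ + 1) / (ℓ + 1) with hK₁def
  set K₂ : ℝ := b ^ (ℓ - 1) / (ℓ - 1) with hK₂def
  have hK₁ : 0 < K₁ := by
    apply div_pos (Real.rpow_pos_of_pos hb _); linarith
  have hK₂ : 0 < K₂ := div_pos (Real.rpow_pos_of_pos hb _) hℓ1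
  refine ⟨2 * (K₁ + K₂), by positivity, ?_⟩
  intro a M hM hcd hsupp hbd L
  -- derivative bounds
  have hA0 : ∀ x ∈ Set.Ioo (0:ℝ) b, ‖a x‖ ≤ M * x ^ ℓ := by
    intro x hx
    have := hbd x hx 0 (by norm_num)
    simpa using this
  have hA1 : ∀ x ∈ Set.Ioo (0:ℝ) b, ‖deriv a x‖ ≤ M * x ^ (ℓ - 1) := by
    intro x hx
    have := hbd x hx 1 (by norm_num)
    simpa [iteratedDeriv_one] using this
  have hA2 : ∀ x ∈ Set.Ioo (0:ℝ) b, ‖deriv (deriv a) x‖ ≤ M * x ^ (ℓ - 2) := by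
    intro x hx
    have h := hbd x hx 2 (by norm_num)
    have h2 : iteratedDeriv 2 a = deriv (deriv a) := by
      rw [show (2:ℕ) = 1 + 1 from rfl, iteratedDeriv_succ, iteratedDeriv_one]
    rw [h2] at h
    simpa using h
  -- regularity facts
  have hcd1 : ContDiffOn ℝ 1 (deriv a) (Set.Ioi 0) :=
    hcd.deriv_of_isOpen isOpen_Ioi (by norm_num)
  have hcd0 : ContDiffOn ℝ 0 (deriv (deriv a)) (Set.Ioi 0) :=
    hcd1.deriv_of_isOpen isOpen_Ioi (by norm_num)
  have hcont_a : ContinuousOn a (Set.Ioi 0) := hcd.continuousOn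
  have hcont1 : ContinuousOn (deriv a) (Set.Ioi 0) := hcd1.continuousOn
  have hcont2 : ContinuousOn (deriv (deriv a)) (Set.Ioi 0) := hcd0.continuousOn
  have hder1 : ∀ x ∈ Set.Ioi (0:ℝ), HasDerivAt a (deriv a x) x := fun x hx =>
    ((hcd.differentiableOn (by norm_num)).differentiableAt
      (isOpen_Ioi.mem_nhds hx)).hasDerivAt
  have hder2 : ∀ x ∈ Set.Ioi (0:ℝ), HasDerivAt (deriv a) (deriv (deriv a) x) x := fun x hx =>
    ((hcd1.differentiableOn (by norm_num)).differentiableAt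
      (isOpen_Ioi.mem_nhds hx)).hasDerivAt
  have ha_b : a b = 0 := hsupp b le_rfl
  have ha'_b : deriv a b = 0 := by
    have h1 : HasDerivWithinAt a 0 (Set.Ici b) b := by
      have h0 : HasDerivWithinAt (fun _ : ℝ => (0:ℂ)) 0 (Set.Ici b) b :=
        (hasDerivAt_const b (0:ℂ)).hasDerivWithinAt
      exact h0.congr (fun y hy => hsupp y hy) (hsupp b le_rfl)
    have h2 : HasDerivWithinAt a (deriv a b) (Set.Ici b) b :=
      (hder1 b hb).hasDerivWithinAt
    exact (uniqueDiffOn_Ici b b Set.self_mem_Ici).eq_deriv _ h2 h1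
  -- the integrand
  set f₁ : ℝ → ℂ := fun x => Complex.exp (Complex.I * x * L) * a x with hf₁def
  have hexp : ∀ (z : ℂ) (x : ℝ), ‖Complex.exp (z * x)‖ = 1 ∨ True := fun _ _ => Or.inr trivial
  have hexp1 : ∀ x : ℝ, ‖Complex.exp (Complex.I * x * L)‖ = 1 := by
    intro x
    rw [show Complex.I * (x:ℂ) * (L:ℂ) = ((x * L : ℝ) : ℂ) * Complex.I by push_cast; ring]
    exact Complex.norm_exp_ofReal_mul_I _
  have hbd₁ : ∀ x ∈ Set.Ioo (0:ℝ) b, ‖f₁ x‖ ≤ M * x ^ ℓ := by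
    intro x hx
    rw [hf₁def]
    simp only [norm_mul, hexp1, one_mul]
    exact hA0 x hx
  have hcf₁ : ContinuousOn f₁ (Set.Ioo 0 b) := by
    apply ContinuousOn.mul _ (hcont_a.mono Set.Ioo_subset_Ioi_self)
    fun_prop
  have hℓ' : (-1:ℝ) < ℓ := by linarith
  have hI₁ : IntegrableOn f₁ (Set.Ioo 0 b) := aux_integrable hb hℓ' hcf₁ hbd₁
  -- reduce to Ioo 0 b
  have hred : (∫ l in Set.Ioi (0:ℝ), f₁ l) = ∫ l in Set.Ioo (0:ℝ) b, f₁ l := by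
    have heqon : Set.EqOn f₁ ((Set.Ioo (0:ℝ) b).indicator f₁) (Set.Ioi 0) := by
      intro x hx
      by_cases hxb : x < b
      · rw [Set.indicator_of_mem (show x ∈ Set.Ioo (0:ℝ) b from ⟨hx, hxb⟩) f₁]
      · rw [Set.indicator_of_notMem (fun h => hxb h.2)]
        rw [hf₁def]
        simp [hsupp x (not_lt.1 hxb)]
    rw [setIntegral_congr_fun measurableSet_Ioi heqon,
      setIntegral_indicator measurableSet_Ioo,
      Set.inter_eq_self_of_subset_right Set.Ioo_subset_Ioi_self]
  rw [hred]
  -- two cases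
  rcases le_total |L| 1 with hL | hL
  · -- small L : trivial bound
    have h1 : ‖∫ l in Set.Ioo (0:ℝ) b, f₁ l‖ ≤ M * (b ^ (ℓ + 1) / (ℓ + 1)) := by
      have := aux_norm_bound hb hℓ' hbd₁
      convert this using 3 <;> ring
    have hL2 : L ^ 2 ≤ 1 := by
      rw [← sq_abs]; nlinarith [abs_nonneg L]
    have h2 : (0:ℝ) < 1 + L ^ 2 := by positivity
    refine h1.trans ?_
    rw [le_div_iff₀ h2]
    have : M * (b ^ (ℓ + 1) / (ℓ + 1)) = M * K₁ := by rw [hK₁def]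
    rw [this]
    nlinarith [mul_pos hM hK₁, mul_pos hM hK₂, mul_nonneg (mul_nonneg hM.le hK₁.le) (sq_nonneg L)]
  · -- large L : integrate by parts twice
    have hLne : (L:ℝ) ≠ 0 := by
      intro h; rw [h] at hL; simp at hL; linarith
    have hL2 : 1 ≤ L ^ 2 := by rw [← sq_abs]; nlinarith [abs_nonneg L]
    have hL2pos : (0:ℝ) < L ^ 2 := by positivity
    set c : ℂ := Complex.I * L with hcdef
    have hc : c ≠ 0 := by
      simp [hcdef, Complex.I_ne_zero, Complex.ofReal_eq_zero, hLne]
    have hcnorm : ‖c‖ = |L| := by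
      simp [hcdef, Complex.norm_real]
    set v : ℝ → ℂ := fun x => Complex.exp (c * x) / c with hvdef
    set w : ℝ → ℂ := fun x => Complex.exp (c * x) / c ^ 2 with hwdef
    have hexpc : ∀ x : ℝ, ‖Complex.exp (c * x)‖ = 1 := by
      intro x
      rw [show c * (x:ℂ) = ((L * x : ℝ) : ℂ) * Complex.I by rw [hcdef]; push_cast; ring]
      exact Complex.norm_exp_ofReal_mul_I _
    have hde : ∀ x : ℝ, HasDerivAt (fun y : ℝ => Complex.exp (c * y)) (c * Complex.exp (c * x)) x := by
      intro x
      have h0 : HasDerivAt (fun z : ℂ => Complex.exp (c * z)) (Complex.exp (c * x) * (c * 1)) (x : ℂ) :=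
        ((hasDerivAt_id (x:ℂ)).const_mul c).cexp
      have := h0.comp_ofReal
      simpa [mul_comm] using this
    have hdv : ∀ x : ℝ, HasDerivAt v (Complex.exp (c * x)) x := by
      intro x
      have h0 := (hde x).div_const c
      refine h0.congr_deriv ?_
      field_simp
    have hdw : ∀ x : ℝ, HasDerivAt w (v x) x := by
      intro x
      have h0 := (hde x).div_const (c ^ 2)
      refine h0.congr_deriv ?_
      rw [hvdef]
      field_simp
    have hvnorm : ∀ x : ℝ, ‖v x‖ = 1 / |L| := by
      intro x; rw [hvdef]; simp [norm_div, hexpc, hcnorm]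
    have hwnorm : ∀ x : ℝ, ‖w x‖ = 1 / L ^ 2 := by
      intro x
      rw [hwdef]
      simp only [norm_div, hexpc, norm_pow, hcnorm]
      rw [sq_abs]
    have hcv : Continuous v := by
      rw [hvdef]; fun_prop
    have hcw : Continuous w := by
      rw [hwdef]; fun_prop
    set f₂ : ℝ → ℂ := fun x => deriv (deriv a) x * w x with hf₂def
    have hℓ2 : (-1:ℝ) < ℓ - 2 := by linarith
    have hbd₂ : ∀ x ∈ Set.Ioo (0:ℝ) b, ‖f₂ x‖ ≤ M / L ^ 2 * x ^ (ℓ - 2) := by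
      intro x hx
      rw [hf₂def]
      simp only [norm_mul, hwnorm]
      calc ‖deriv (deriv a) x‖ * (1 / L ^ 2) ≤ M * x ^ (ℓ - 2) * (1 / L ^ 2) := by
            apply mul_le_mul_of_nonneg_right (hA2 x hx); positivity
        _ = M / L ^ 2 * x ^ (ℓ - 2) := by ring
    have hcf₂ : ContinuousOn f₂ (Set.Ioo 0 b) :=
      (hcont2.mono Set.Ioo_subset_Ioi_self).mul hcw.continuousOn
    have hI₂ : IntegrableOn f₂ (Set.Ioo 0 b) := aux_integrable hb hℓ2 hcf₂ hbd₂
    -- integration by parts on [ε, b]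
    have key : ∀ ε ∈ Set.Ioo (0:ℝ) b,
        (∫ x in ε..b, f₁ x)
          = -(a ε * v ε) + deriv a ε * w ε + ∫ x in ε..b, f₂ x := by
      intro ε hε
      have hsub : Set.uIcc ε b ⊆ Set.Ioi 0 := by
        rw [Set.uIcc_of_le hε.2.le]
        exact fun x hx => lt_of_lt_of_le hε.1 hx.1
      have h1 := intervalIntegral.integral_mul_deriv_eq_deriv_mul
        (a := ε) (b := b) (u := a) (u' := deriv a) (v := v)
        (v' := fun x : ℝ => Complex.exp (c * x))
        (fun x hx => hder1 x (hsub hx)) (fun x _ => hdv x)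
        ((hcont1.mono hsub).intervalIntegrable)
        ((Complex.continuous_exp.comp (by fun_prop)).intervalIntegrable ε b)
      have h2 := intervalIntegral.integral_mul_deriv_eq_deriv_mul
        (a := ε) (b := b) (u := deriv a) (u' := deriv (deriv a)) (v := w) (v' := v)
        (fun x hx => hder2 x (hsub hx)) (fun x _ => hdw x)
        ((hcont2.mono hsub).intervalIntegrable)
        (hcv.intervalIntegrable ε b)
      have hfun : ∀ x : ℝ, f₁ x = a x * Complex.exp (c * x) := by
        intro x
        show Complex.exp (Complex.I * x * L) * a x = a x * Complex.exp (c * x)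
        rw [mul_comm]
        congr 2
        rw [hcdef]; ring
      calc (∫ x in ε..b, f₁ x) = ∫ x in ε..b, a x * Complex.exp (c * x) := by
            simp only [hfun]
        _ = a b * v b - a ε * v ε - ∫ x in ε..b, deriv a x * v x := h1
        _ = -(a ε * v ε) + deriv a ε * w ε + ∫ x in ε..b, f₂ x := by
            rw [h2, ha_b, ha'_b]; simp only [hf₂def]; ring
    -- limits as ε → 0⁺
    have T1 : Filter.Tendsto (fun ε => ∫ x in ε..b, f₁ x) (nhdsWithin 0 (Set.Ioi 0))
        (nhds (∫ x in Set.Ioo (0:ℝ) b, f₁ x)) := aux_tendsto hb hℓ' hI₁ hbd₁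
    have T2' : Filter.Tendsto (fun ε => ∫ x in ε..b, f₂ x) (nhdsWithin 0 (Set.Ioi 0))
        (nhds (∫ x in Set.Ioo (0:ℝ) b, f₂ x)) := aux_tendsto hb hℓ2 hI₂ hbd₂
    have hmem : Set.Ioo (0:ℝ) b ∈ nhdsWithin (0:ℝ) (Set.Ioi 0) :=
      Ioo_mem_nhdsGT_of_mem ⟨le_refl 0, hb⟩
    have hrpow_tendsto : ∀ s : ℝ, 0 < s → Filter.Tendsto (fun ε : ℝ => ε ^ s)
        (nhdsWithin 0 (Set.Ioi 0)) (nhds 0) := by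
      intro s hs
      have := (Real.continuousAt_rpow_const 0 s (Or.inr hs.le)).tendsto
      rw [Real.zero_rpow hs.ne'] at this
      exact this.mono_left nhdsWithin_le_nhds
    have Tb1 : Filter.Tendsto (fun ε : ℝ => a ε * v ε) (nhdsWithin 0 (Set.Ioi 0)) (nhds 0) := by
      have hev : ∀ᶠ ε in nhdsWithin (0:ℝ) (Set.Ioi 0),
          ‖a ε * v ε‖ ≤ M * ε ^ ℓ * (1 / |L|) := by
        refine Filter.eventually_of_mem hmem (fun ε hε => ?_)
        rw [norm_mul, hvnorm]
        exact mul_le_mul_of_nonneg_right (hA0 ε hε) (by positivity)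
      refine squeeze_zero_norm' hev ?_
      have := ((hrpow_tendsto ℓ (by linarith)).const_mul M).mul_const (1 / |L|)
      simpa using this
    have Tb2 : Filter.Tendsto (fun ε : ℝ => deriv a ε * w ε)
        (nhdsWithin 0 (Set.Ioi 0)) (nhds 0) := by
      have hev : ∀ᶠ ε in nhdsWithin (0:ℝ) (Set.Ioi 0),
          ‖deriv a ε * w ε‖ ≤ M * ε ^ (ℓ - 1) * (1 / L ^ 2) := by
        refine Filter.eventually_of_mem hmem (fun ε hε => ?_)
        rw [norm_mul, hwnorm]
        exact mul_le_mul_of_nonneg_right (hA1 ε hε) (by positivity)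
      refine squeeze_zero_norm' hev ?_
      have := ((hrpow_tendsto (ℓ - 1) hℓ1).const_mul M).mul_const (1 / L ^ 2)
      simpa using this
    have Tcombo : Filter.Tendsto (fun ε => ∫ x in ε..b, f₁ x) (nhdsWithin 0 (Set.Ioi 0))
        (nhds (∫ x in Set.Ioo (0:ℝ) b, f₂ x)) := by
      have h := (Tb1.neg.add Tb2).add T2'
      rw [neg_zero, zero_add, zero_add] at h
      exact h.congr' (Filter.eventuallyEq_of_mem hmem (fun ε hε => (key ε hε).symm))
    have heq : (∫ x in Set.Ioo (0:ℝ) b, f₁ x) = ∫ x in Set.Ioo (0:ℝ) b, f₂ x :=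
      tendsto_nhds_unique T1 Tcombo
    rw [heq]
    have h1 : ‖∫ x in Set.Ioo (0:ℝ) b, f₂ x‖ ≤ M / L ^ 2 * (b ^ (ℓ - 1) / (ℓ - 1)) := by
      have := aux_norm_bound hb hℓ2 hbd₂
      convert this using 3 <;> ring
    refine h1.trans ?_
    have h2 : (0:ℝ) < 1 + L ^ 2 := by positivity
    have hKval : b ^ (ℓ - 1) / (ℓ - 1) = K₂ := by rw [hK₂def]
    rw [hKval, div_mul_eq_mul_div, div_le_div_iff₀ hL2pos h2]
    nlinarith [mul_pos (mul_pos hM hK₁) hL2pos, mul_pos (mul_pos hM hK₂) hL2pos,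
      mul_le_mul_of_nonneg_left hL2 (mul_pos hM hK₂).le]

end StmtSeven
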